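/- Let R be a commutative ring, S a multiplicative subset of R, P a u-S-pseudo-projective R-module, and A a direct summand of P. Then for every submodule K of A there exists s ∈ S such that for every u-S-epimorphism g : P → A/K there is an R-homomorphism h : P → A with s·g = π_K ∘ h, where π_K : A → A/K is the quotient map. -/

import Mathlib

/-!  Definitions for uniformly-S-pseudo-projective modules
(M. Adarbeh, M. Saleh, "Uniformly-S-pseudo-projective modules"). -/

universe u v w

/-- `S` is a multiplicative subset of the commutative ring `R`:
`1 ∈ S`, `0 ∉ S`, and `S` is closed under multiplication. -/
def IsMultSubset {R : Type u} [CommRing R] (S : Set R) : Prop :=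
  1 ∈ S ∧ (0 : R) ∉ S ∧ ∀ ⦃a b : R⦄, a ∈ S → b ∈ S → a * b ∈ S

/-- An `R`-module `T` is `u`-`S`-torsion if some `s ∈ S` annihilates it. -/
def IsUSTorsion {R : Type u} [CommRing R] (S : Set R) (T : Type v) [AddCommGroup T]
    [Module R T] : Prop :=
  ∃ s ∈ S, ∀ t : T, s • t = 0

/-- `f` is a `u`-`S`-monomorphism: its kernel is `u`-`S`-torsion. -/
def IsUSMono {R : Type u} [CommRing R] (S : Set R) {M : Type v} {N : Type w}
    [AddCommGroup M] [Module R M] [AddCommGroup N] [Module R N] (f : M →ₗ[R] N) : Prop :=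
  ∃ s ∈ S, ∀ m ∈ LinearMap.ker f, s • m = (0 : M)

/-- `f` is a `u`-`S`-epimorphism: its cokernel is `u`-`S`-torsion. -/
def IsUSEpi {R : Type u} [CommRing R] (S : Set R) {M : Type v} {N : Type w}
    [AddCommGroup M] [Module R M] [AddCommGroup N] [Module R N] (f : M →ₗ[R] N) : Prop :=
  ∃ s ∈ S, ∀ n : N, s • n ∈ LinearMap.range f

/-- `f` is a `u`-`S`-isomorphism: both a `u`-`S`-monomorphism and a `u`-`S`-epimorphism. -/
def IsUSIso {R : Type u} [CommRing R] (S : Set R) {M : Type v} {N : Type w}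
    [AddCommGroup M] [Module R M] [AddCommGroup N] [Module R N] (f : M →ₗ[R] N) : Prop :=
  IsUSMono S f ∧ IsUSEpi S f

/-- `P` is `u`-`S`-pseudo-projective: for every submodule `K` of `P` there is `s ∈ S` such that
every `u`-`S`-epimorphism `f : P → P/K` satisfies `s • f = π_K ∘ g` for some endomorphism
`g` of `P`. -/
def IsUSPseudoProjective {R : Type u} [CommRing R] (S : Set R) (P : Type v)
    [AddCommGroup P] [Module R P] : Prop :=
  ∀ K : Submodule R P, ∃ s ∈ S, ∀ f : P →ₗ[R] P ⧸ K, IsUSEpi S f →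
    ∃ g : P →ₗ[R] P, s • f = K.mkQ.comp g

/-- `M` is `u`-`S`-quasi-projective. -/
def IsUSQuasiProjective {R : Type u} [CommRing R] (S : Set R) (M : Type v)
    [AddCommGroup M] [Module R M] : Prop :=
  ∀ K : Submodule R M, ∃ s ∈ S, ∀ f : M →ₗ[R] M ⧸ K,
    ∃ g : M →ₗ[R] M, s • f = K.mkQ.comp g

/-- `Q` is `u`-`S`-projective (test modules in `Type v₁`). -/
def IsUSProjective.{u₁, v₁, w₁} {R : Type u₁} [CommRing R] (S : Set R) (Q : Type w₁)
    [AddCommGroup Q] [Module R Q] : Prop :=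
  ∀ (B C : Type v₁) [AddCommGroup B] [AddCommGroup C] [Module R B] [Module R C]
    (g : B →ₗ[R] C), IsUSEpi S g →
      ∃ s ∈ S, ∀ h : Q →ₗ[R] C, ∃ h' : Q →ₗ[R] B, s • h = g.comp h'

/-- `M` is `u`-`S`-injective (test modules in `Type v₁`). -/
def IsUSInjective.{u₁, v₁, w₁} {R : Type u₁} [CommRing R] (S : Set R) (M : Type w₁)
    [AddCommGroup M] [Module R M] : Prop :=
  ∀ (A B : Type v₁) [AddCommGroup A] [AddCommGroup B] [Module R A] [Module R B]
    (f : A →ₗ[R] B), IsUSMono S f →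
      ∃ s ∈ S, ∀ h : A →ₗ[R] M, ∃ h' : B →ₗ[R] M, s • h = h'.comp f

/-- `E` is `u`-`S`-pseudo-injective. -/
def IsUSPseudoInjective {R : Type u} [CommRing R] (S : Set R) (E : Type v)
    [AddCommGroup E] [Module R E] : Prop :=
  ∀ K : Submodule R E, ∃ s ∈ S, ∀ f : ↥K →ₗ[R] E, IsUSMono S f →
    ∃ g : E →ₗ[R] E, g.comp K.subtype = s • f

/-- The sequence `0 → A →f B →g C → 0` is short `u`-`S`-exact. -/
def IsShortUSExact {R : Type u} [CommRing R] (S : Set R) {A B C : Type v}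
    [AddCommGroup A] [Module R A] [AddCommGroup B] [Module R B] [AddCommGroup C] [Module R C]
    (f : A →ₗ[R] B) (g : B →ₗ[R] C) : Prop :=
  IsUSMono S f ∧ IsUSEpi S g ∧
    ∃ s ∈ S, (∀ x ∈ LinearMap.ker g, s • x ∈ LinearMap.range f) ∧
      (∀ x ∈ LinearMap.range f, s • x ∈ LinearMap.ker g)

/-- The short `u`-`S`-exact sequence `0 → A →f B →g C → 0` is `u`-`S`-split:
some multiple `s • 1_A` of the identity factors back through `f`. -/
def IsUSSplitSeq {R : Type u} [CommRing R] (S : Set R) {A B : Type v}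
    [AddCommGroup A] [Module R A] [AddCommGroup B] [Module R B] (f : A →ₗ[R] B) : Prop :=
  ∃ s ∈ S, ∃ f' : B →ₗ[R] A, f'.comp f = s • (LinearMap.id : A →ₗ[R] A)

/-- `M` is a `u`-`S`-semisimple module (test sequences with modules in `Type v₁`). -/
def IsUSSemisimpleModule.{u₁, v₁} {R : Type u₁} [CommRing R] (S : Set R) (M : Type v₁)
    [AddCommGroup M] [Module R M] : Prop :=
  ∀ (A C : Type v₁) [AddCommGroup A] [AddCommGroup C] [Module R A] [Module R C]
    (f : A →ₗ[R] M) (g : M →ₗ[R] C), IsShortUSExact S f g → IsUSSplitSeq S f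

/-- `R` is a `u`-`S`-semisimple ring: every free `R`-module is `u`-`S`-semisimple. -/
def IsUSSemisimpleRing.{u₁, v₁} {R : Type u₁} [CommRing R] (S : Set R) : Prop :=
  ∀ (F : Type v₁) [AddCommGroup F] [Module R F], Module.Free R F →
    IsUSSemisimpleModule.{u₁, v₁} S F

/-- A submodule `N` of `M` is a `u`-`S`-direct summand of `M` if there is an `R`-module `N'`
and a `u`-`S`-isomorphism between `M` and `N ⊕ N'`. -/
def IsUSDirectSummand {R : Type u} [CommRing R] (S : Set R) {M : Type v}
    [AddCommGroup M] [Module R M] (N : Submodule R M) : Prop :=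
  ∃ (N' : ModuleCat.{v} R) (h : M →ₗ[R] (↥N × ↥N')), IsUSIso S h

/-- `A` is `u`-`S`-projective relative to `B`. -/
def IsUSProjectiveRel {R : Type u} [CommRing R] (S : Set R) (A : Type v) (B : Type w)
    [AddCommGroup A] [Module R A] [AddCommGroup B] [Module R B] : Prop :=
  ∀ K : Submodule R B, ∃ s ∈ S, ∀ f : A →ₗ[R] B ⧸ K,
    ∃ h : A →ₗ[R] B, s • f = K.mkQ.comp h

/-- If `P` is `u`-`S`-pseudo-projective and `A` is a direct summand of `P`, then for every
submodule `K` of `A` there is `s ∈ S` such that every `u`-`S`-epimorphism `g : P → A/K`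
satisfies `s • g = π_K ∘ h` for some homomorphism `h : P → A`. -/
theorem uSLift_of_uSPseudoProjective_directSummand
    {R : Type u} [CommRing R] (S : Set R) (hS : IsMultSubset S)
    {P : Type v} [AddCommGroup P] [Module R P] (hP : IsUSPseudoProjective S P)
    (A : Submodule R P) (hA : ∃ A' : Submodule R P, IsCompl A A') :
    ∀ K : Submodule R ↥A, ∃ s ∈ S, ∀ g : P →ₗ[R] (↥A ⧸ K), IsUSEpi S g →
      ∃ h : P →ₗ[R] ↥A, s • g = K.mkQ.comp h := by
  intro K
  obtain ⟨A', hcompl⟩ := hA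
  set π : P →ₗ[R] ↥A := A.projectionOnto A' hcompl with hπ
  set L : Submodule R P := K.map A.subtype ⊔ A' with hL
  have hsubA' : ∀ x : P, x - (π x : P) ∈ A' := by
    intro x
    rw [← Submodule.linearProjOfIsCompl_apply_eq_zero_iff hcompl]
    have h2 : A.projectionOnto A' hcompl ((π x : P)) = π x :=
      Submodule.projectionOnto_apply_left hcompl (π x)
    rw [map_sub, h2, hπ, sub_self]
  have hKsub : K ≤ LinearMap.ker (L.mkQ.comp A.subtype) := by
    intro k hk
    simp only [LinearMap.mem_ker, LinearMap.comp_apply, Submodule.mkQ_apply,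
      Submodule.Quotient.mk_eq_zero]
    exact Submodule.mem_sup_left ⟨k, hk, rfl⟩
  set e : (↥A ⧸ K) →ₗ[R] (P ⧸ L) := K.liftQ (L.mkQ.comp A.subtype) hKsub with he
  have he_mk : ∀ a : ↥A, e (K.mkQ a) = L.mkQ (a : P) := fun a => rfl
  have he_inj : Function.Injective e := by
    rw [← LinearMap.ker_eq_bot]
    rw [Submodule.ker_liftQ_eq_bot]
    intro a ha
    have ha' : (a : P) ∈ L := by
      simpa [Submodule.Quotient.mk_eq_zero] using ha
    rw [hL] at ha'
    obtain ⟨y, hy, z, hz, hyz⟩ := Submodule.mem_sup.mp ha'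
    obtain ⟨k, hk, rfl⟩ := hy
    have : (a : P) - (k : P) ∈ A' := by
      rw [← hyz]; simpa using hz
    have hmem : (a : P) - (k : P) ∈ A ⊓ A' := ⟨A.sub_mem a.2 k.2, this⟩
    rw [hcompl.inf_eq_bot] at hmem
    have : a = k := Subtype.ext (sub_eq_zero.mp (Submodule.mem_bot R |>.mp hmem))
    rw [this]; exact hk
  have he_mkπ : ∀ x : P, e (K.mkQ (π x)) = L.mkQ x := by
    intro x
    rw [he_mk]
    have hz : L.mkQ x - L.mkQ (π x : P) = 0 := by
      rw [← map_sub, Submodule.mkQ_apply, Submodule.Quotient.mk_eq_zero]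
      exact Submodule.mem_sup_right (hsubA' x)
    exact (sub_eq_zero.mp hz).symm
  have he_surj : Function.Surjective e := by
    intro q
    obtain ⟨x, rfl⟩ := L.mkQ_surjective q
    exact ⟨K.mkQ (π x), he_mkπ x⟩
  obtain ⟨s, hs, hsf⟩ := hP L
  refine ⟨s, hs, ?_⟩
  intro g hg
  have hf : IsUSEpi S (e.comp g) := by
    obtain ⟨t, ht, htg⟩ := hg
    refine ⟨t, ht, ?_⟩
    intro n
    obtain ⟨m, rfl⟩ := he_surj n
    obtain ⟨p, hp⟩ := htg m
    exact ⟨p, by rw [LinearMap.comp_apply, hp, map_smul]⟩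
  obtain ⟨g₀, hg₀⟩ := hsf (e.comp g) hf
  refine ⟨π.comp g₀, ?_⟩
  ext p
  apply he_inj
  have h1 : e (s • g p) = L.mkQ (g₀ p) := by
    have := LinearMap.congr_fun hg₀ p
    simpa [LinearMap.comp_apply, map_smul] using this
  rw [LinearMap.smul_apply, h1, LinearMap.comp_apply, LinearMap.comp_apply]
  exact (he_mkπ (g₀ p)).symm
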